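/- Let 0 < β < 1, λ > 0, α ≥ 0, and let ξ be a real number. Then the function y ↦ (e^{iyξ} − 1)·α·e^{−λy}·y^{−1−β} is integrable on (0,∞) and ∫₀^∞ (e^{iyξ} − 1)·α·e^{−λy}·y^{−1−β} dy = α·Γ(−β)·((λ − iξ)^β − λ^β), where z^β denotes the principal complex power. -/

import Mathlib

open MeasureTheory Set Filter
open scoped Topology

lemma aux_abs_exp (t : ℝ) : ‖Complex.exp (t * Complex.I) - 1‖ ≤ |t| := by
  rw [Complex.norm_def]
  rw [show |t| = Real.sqrt (t ^ 2) by rw [Real.sqrt_sq_eq_abs]]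
  apply Real.sqrt_le_sqrt
  have h1 : Complex.exp (t * Complex.I) = Real.cos t + Real.sin t * Complex.I := by
    rw [Complex.exp_mul_I]; simp [Complex.ofReal_cos, Complex.ofReal_sin]
  rw [h1]
  have : Complex.normSq (↑(Real.cos t) + ↑(Real.sin t) * Complex.I - 1)
      = (Real.cos t - 1) ^ 2 + Real.sin t ^ 2 := by
    simp [Complex.normSq_apply, Complex.cos_ofReal_re, Complex.sin_ofReal_re]; ring
  rw [this]
  have hc : Real.cos t = 1 - 2 * Real.sin (t/2) ^ 2 := by
    have h := Real.cos_two_mul' (t/2)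
    rw [show (2:ℝ) * (t/2) = t by ring] at h
    nlinarith [Real.sin_sq_add_cos_sq (t/2)]
  nlinarith [Real.sin_sq_le_sq (x := t/2), Real.sin_sq_add_cos_sq t, hc]

lemma aux_int_real {s b : ℝ} (hs : -1 < s) (hb : 0 < b) :
    IntegrableOn (fun y : ℝ => y ^ s * Real.exp (-(b * y))) (Ioi 0) := by
  have := integrableOn_rpow_mul_exp_neg_mul_rpow hs one_pos hb
  simpa [Real.rpow_one] using this

lemma aux_cont_rpow (c : ℝ) : ContinuousOn (fun y : ℝ => y ^ c) (Ioi (0:ℝ)) :=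
  fun y hy => (Real.continuousAt_rpow_const y c (Or.inl (ne_of_gt hy))).continuousWithinAt

lemma aux_meas (s : ℝ) (z : ℂ) :
    AEStronglyMeasurable (fun y : ℝ => ((y ^ s : ℝ) : ℂ) * Complex.exp (-z * y))
      (volume.restrict (Ioi 0)) := by
  apply ContinuousOn.aestronglyMeasurable _ measurableSet_Ioi
  exact (Complex.continuous_ofReal.comp_continuousOn (aux_cont_rpow s)).mul
    ((Complex.continuous_exp.comp (by continuity)).continuousOn)

lemma aux_norm (s : ℝ) (z : ℂ) {y : ℝ} (hy : 0 < y) :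
    ‖((y ^ s : ℝ) : ℂ) * Complex.exp (-z * y)‖ = y ^ s * Real.exp (-(z.re * y)) := by
  rw [norm_mul, Complex.norm_real, Real.norm_eq_abs,
    Complex.norm_exp, abs_of_nonneg (Real.rpow_nonneg hy.le s)]
  congr 1
  simp

lemma aux_intC {s : ℝ} (hs : -1 < s) {z : ℂ} (hz : 0 < z.re) :
    IntegrableOn (fun y : ℝ => ((y ^ s : ℝ) : ℂ) * Complex.exp (-z * y)) (Ioi 0) := by
  apply Integrable.mono' (aux_int_real hs hz) (aux_meas s z)
  filter_upwards [self_mem_ae_restrict measurableSet_Ioi] with y hy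
  rw [aux_norm s z hy]


lemma aux_real {β : ℝ} (hβ0 : 0 < β) (hβ1 : β < 1) {r : ℝ} (hr : 0 < r) :
    ∫ y in Ioi (0:ℝ), ((y ^ (-β) : ℝ) : ℂ) * Complex.exp (-(r:ℂ) * y)
      = (Real.Gamma (1 - β) : ℂ) * (r:ℂ) ^ ((β:ℂ) - 1) := by
  have ha : 0 < (1 - (β:ℂ)).re := by simp [hβ1]
  have h := Complex.integral_cpow_mul_exp_neg_mul_Ioi ha hr
  have h2 : ∫ y in Ioi (0:ℝ), ((y ^ (-β) : ℝ) : ℂ) * Complex.exp (-(r:ℂ) * y)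
      = ∫ t in Ioi (0:ℝ), (t:ℂ) ^ ((1 - (β:ℂ)) - 1) * Complex.exp (-((r:ℂ) * t)) := by
    refine setIntegral_congr_fun measurableSet_Ioi (fun y hy => ?_)
    rw [Complex.ofReal_cpow (le_of_lt hy)]
    push_cast
    ring_nf
  rw [h2, h]
  have harg : ((r:ℂ)).arg ≠ Real.pi := by
    rw [Complex.arg_ofReal_of_nonneg hr.le]
    exact Real.pi_ne_zero.symm
  have hinv : (1 / (r:ℂ)) ^ (1 - (β:ℂ)) = (r:ℂ) ^ ((β:ℂ) - 1) := by
    rw [one_div, Complex.inv_cpow _ _ harg, ← Complex.cpow_neg]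
    ring_nf
  rw [hinv]
  have : (1 : ℂ) - (β:ℂ) = ((1 - β : ℝ) : ℂ) := by push_cast; ring
  rw [this, Complex.Gamma_ofReal, mul_comm]


lemma aux_key {β : ℝ} (hβ0 : 0 < β) (hβ1 : β < 1) {z : ℂ} (hz : 0 < z.re) :
    ∫ y in Ioi (0:ℝ), ((y ^ (-β) : ℝ) : ℂ) * Complex.exp (-z * y)
      = (Real.Gamma (1 - β) : ℂ) * z ^ ((β:ℂ) - 1) := by
  set U : Set ℂ := {w : ℂ | 0 < w.re} with hU
  set f : ℂ → ℂ := fun w => ∫ y in Ioi (0:ℝ), ((y ^ (-β) : ℝ):ℂ) * Complex.exp (-w*y) with hfdef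
  set g : ℂ → ℂ := fun w => (Real.Gamma (1-β):ℂ) * w ^ ((β:ℂ)-1) with hgdef
  have hUo : IsOpen U := isOpen_lt continuous_const Complex.continuous_re
  have hβ : (-1 : ℝ) < -β := by linarith
  have hβ' : (-1 : ℝ) < 1 - β := by linarith
  have hf : DifferentiableOn ℂ f U := by
    intro w₀ hw₀
    apply DifferentiableAt.differentiableWithinAt
    have hw₀' : 0 < w₀.re := hw₀
    set ε : ℝ := w₀.re / 2 with hε
    have hε0 : 0 < ε := by positivity
    have key := hasDerivAt_integral_of_dominated_loc_of_deriv_le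
      (μ := volume.restrict (Ioi (0:ℝ)))
      (F := fun w (y : ℝ) => ((y ^ (-β) : ℝ):ℂ) * Complex.exp (-w*y))
      (F' := fun w (y : ℝ) => ((y ^ (-β) : ℝ):ℂ) * (Complex.exp (-w*y) * (-(y:ℂ))))
      (x₀ := w₀) (bound := fun y => y ^ (1-β) * Real.exp (-(ε * y)))
      (Metric.ball_mem_nhds w₀ hε0) (Eventually.of_forall fun w => aux_meas _ _) (aux_intC hβ hw₀') ?_ ?_
      (aux_int_real hβ' hε0) ?_
    · exact key.2.differentiableAt
    · -- measurability of F' w₀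
      apply ContinuousOn.aestronglyMeasurable _ measurableSet_Ioi
      exact (Complex.continuous_ofReal.comp_continuousOn (aux_cont_rpow (-β))).mul
        (((Complex.continuous_exp.comp (by continuity)).mul
          (by continuity)).continuousOn)
    · -- bound
      filter_upwards [self_mem_ae_restrict measurableSet_Ioi] with y hy
      intro w hw
      have hyy : (0:ℝ) < y := hy
      have : ‖((y ^ (-β) : ℝ):ℂ) * (Complex.exp (-w*y) * (-(y:ℂ)))‖
          = y ^ (-β) * Real.exp (-(w.re * y)) * y := by
        rw [norm_mul, norm_mul, ← mul_assoc, ← norm_mul, aux_norm (-β) w hyy]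
        simp [abs_of_nonneg hyy.le]
      rw [this]
      have h1 : y ^ (-β) * y = y ^ (1-β) := by
        have h2 := Real.rpow_add hyy (-β) 1
        rw [Real.rpow_one] at h2
        rw [show (1-β) = -β+1 by ring, h2]
      have hre : ε ≤ w.re := by
        have := Complex.abs_re_le_norm (w - w₀)
        rw [Complex.sub_re] at this
        have hd : ‖w - w₀‖ < ε := by
          simpa [Complex.dist_eq] using mem_ball_iff_norm.mp hw
        have : |w.re - w₀.re| < ε := lt_of_le_of_lt this hd
        have := abs_lt.mp this
        simp only [hε] at *
        linarith [this.1]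
      have hexp : Real.exp (-(w.re * y)) ≤ Real.exp (-(ε * y)) := by
        apply Real.exp_le_exp.mpr
        nlinarith
      calc y ^ (-β) * Real.exp (-(w.re * y)) * y
          = (y ^ (-β) * y) * Real.exp (-(w.re * y)) := by ring
        _ ≤ (y ^ (-β) * y) * Real.exp (-(ε * y)) := by
            apply mul_le_mul_of_nonneg_left hexp
            positivity
        _ = y ^ (1-β) * Real.exp (-(ε * y)) := by rw [h1]
    · -- derivative
      filter_upwards [self_mem_ae_restrict measurableSet_Ioi] with y hy
      intro w hw
      have := ((((hasDerivAt_id w).neg.mul_const (y:ℂ)).cexp).const_mul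
        (((y ^ (-β) : ℝ):ℂ)))
      simpa [neg_one_mul, mul_comm, mul_assoc, mul_left_comm] using this
  have hg : DifferentiableOn ℂ g U := by
    intro w hw
    exact (((Complex.hasStrictDerivAt_cpow_const (Or.inl hw)).hasDerivAt.differentiableAt).const_mul
      _).differentiableWithinAt
  have hpre : IsPreconnected U := (convex_halfSpace_re_gt 0).isPreconnected
  have h1U : (1:ℂ) ∈ U := by simp [hU]
  have hfreq : ∃ᶠ w in 𝓝[≠] (1:ℂ), f w = g w := by
    have hu : Tendsto (fun n : ℕ => (1 + ((n:ℝ)+1)⁻¹ : ℝ)) atTop (𝓝 1) := by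
      have h0 : Tendsto (fun n : ℕ => ((n:ℝ)+1)⁻¹) atTop (𝓝 0) := by
        simpa only [one_div] using tendsto_one_div_add_atTop_nhds_zero_nat (𝕜 := ℝ)
      simpa using tendsto_const_nhds.add h0
    have huC : Tendsto (fun n : ℕ => ((1 + ((n:ℝ)+1)⁻¹ : ℝ) : ℂ)) atTop (𝓝[≠] (1:ℂ)) := by
      apply tendsto_nhdsWithin_of_tendsto_nhds_of_eventually_within
      · have := (Complex.continuous_ofReal.tendsto 1).comp hu
        rw [Complex.ofReal_one] at this
        exact this.congr fun n => rfl
      · apply Eventually.of_forall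
        intro n
        simp only [mem_compl_iff, mem_singleton_iff]
        intro h
        have : (1 + ((n:ℝ)+1)⁻¹ : ℝ) = 1 := by exact_mod_cast h
        have hpos : (0:ℝ) < ((n:ℝ)+1)⁻¹ := by positivity
        linarith
    apply huC.frequently
    apply Frequently.of_forall
    intro n
    have hrpos : (0:ℝ) < 1 + ((n:ℝ)+1)⁻¹ := by positivity
    exact aux_real hβ0 hβ1 hrpos
  have heq : EqOn f g U :=
    (hf.analyticOnNhd hUo).eqOn_of_preconnected_of_frequently_eq
      (hg.analyticOnNhd hUo) hpre h1U hfreq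
  exact heq hz


/-- Let `0 < β < 1`, `λ > 0`, `α ≥ 0`, and `ξ : ℝ`. Then
`y ↦ (e^{iyξ} − 1)·α·e^{−λy}·y^{−1−β}` is integrable on `(0,∞)` and its integral equals
`α·Γ(−β)·((λ − iξ)^β − λ^β)` (principal complex power). -/
theorem gts_right_tail_integral (β lam α ξ : ℝ) (hβ0 : 0 < β) (hβ1 : β < 1)
    (hlam : 0 < lam) (hα : 0 ≤ α) :
    IntegrableOn (fun y : ℝ =>
        (Complex.exp (Complex.I * y * ξ) - 1) * (α : ℂ) * Complex.exp (-(lam : ℂ) * y)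
          * ((y ^ (-1 - β) : ℝ) : ℂ)) (Ioi 0) ∧
      ∫ y in Ioi (0 : ℝ),
          (Complex.exp (Complex.I * y * ξ) - 1) * (α : ℂ) * Complex.exp (-(lam : ℂ) * y)
            * ((y ^ (-1 - β) : ℝ) : ℂ)
        = (α : ℂ) * (Real.Gamma (-β) : ℂ)
            * (((lam : ℂ) - Complex.I * ξ) ^ (β : ℂ) - (lam : ℂ) ^ (β : ℂ)) := by
  have hβneg : (-1:ℝ) < -β := by linarith
  -- the core function (α removed)
  set h : ℝ → ℝ → ℂ := fun t y =>
    (Complex.exp (Complex.I * y * t) - 1) * Complex.exp (-(lam : ℂ) * y)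
      * ((y ^ (-1 - β) : ℝ) : ℂ) with hh
  -- continuity / measurability of h t
  have hmeas : ∀ t : ℝ, AEStronglyMeasurable (h t) (volume.restrict (Ioi 0)) := by
    intro t
    apply ContinuousOn.aestronglyMeasurable _ measurableSet_Ioi
    apply ContinuousOn.mul
    · exact (((Complex.continuous_exp.comp (by continuity)).sub continuous_const).mul
        (Complex.continuous_exp.comp (by continuity))).continuousOn
    · exact Complex.continuous_ofReal.comp_continuousOn (aux_cont_rpow (-1-β))
  -- pointwise rpow identities
  have hrpow : ∀ {y : ℝ}, 0 < y → y ^ (-1-β) * y = y ^ (-β) := by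
    intro y hy
    have h2 := Real.rpow_add hy (-1-β) 1
    rw [Real.rpow_one] at h2
    rw [show (-β) = -1-β+1 by ring, h2]
  -- norm bound for h t
  have hbound : ∀ (t : ℝ) {y : ℝ}, 0 < y →
      ‖h t y‖ ≤ |t| * (y ^ (-β) * Real.exp (-(lam * y))) := by
    intro t y hy
    rw [hh]
    simp only [norm_mul, Complex.norm_real, Real.norm_eq_abs, Complex.norm_exp]
    have h1 : ‖Complex.exp (Complex.I * y * t) - 1‖ ≤ y * |t| := by
      have h2 := aux_abs_exp (y * t)
      have h3 : ((y * t : ℝ) : ℂ) * Complex.I = Complex.I * y * t := by push_cast; ring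
      rw [h3] at h2
      calc ‖Complex.exp (Complex.I * ↑y * ↑t) - 1‖ ≤ |y * t| := h2
        _ = y * |t| := by rw [abs_mul, abs_of_pos hy]
    have h4 : (-(lam:ℂ) * y).re = -(lam * y) := by simp
    rw [h4, abs_of_nonneg (Real.rpow_nonneg hy.le _)]
    calc ‖Complex.exp (Complex.I * ↑y * ↑t) - 1‖ * Real.exp (-(lam * y)) * y ^ (-1-β)
        ≤ (y * |t|) * Real.exp (-(lam * y)) * y ^ (-1-β) := by
          apply mul_le_mul_of_nonneg_right (mul_le_mul_of_nonneg_right h1 (Real.exp_nonneg _))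
            (Real.rpow_nonneg hy.le _)
      _ = |t| * ((y ^ (-1-β) * y) * Real.exp (-(lam * y))) := by ring
      _ = |t| * (y ^ (-β) * Real.exp (-(lam * y))) := by rw [hrpow hy]
  -- integrability of h t
  have hint : ∀ t : ℝ, IntegrableOn (h t) (Ioi 0) := by
    intro t
    apply Integrable.mono' (((aux_int_real hβneg hlam).const_mul |t|).congr ?_) (hmeas t)
    · filter_upwards [self_mem_ae_restrict measurableSet_Ioi] with y hy
      exact hbound t hy
    · apply Eventually.of_forall; intro y; ring
  -- F and T
  set F : ℝ → ℂ := fun t => ∫ y in Ioi (0:ℝ), h t y with hF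
  set T : ℝ → ℂ := fun t => (Real.Gamma (-β) : ℂ)
      * (((lam : ℂ) - Complex.I * t) ^ (β:ℂ) - (lam:ℂ) ^ (β:ℂ)) with hT
  have hzre : ∀ t : ℝ, 0 < ((lam:ℂ) - Complex.I * t).re := by intro t; simp [hlam]
  have hGamma : (1 - β) ≠ 0 → True := fun _ => trivial
  have hβne : (-β : ℝ) ≠ 0 := by linarith
  have hgam : Real.Gamma (1 - β) = -β * Real.Gamma (-β) := by
    rw [show (1-β : ℝ) = -β + 1 by ring, Real.Gamma_add_one hβne]
  -- derivative of F
  have hF' : ∀ t : ℝ, HasDerivAt F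
      (Complex.I * (Real.Gamma (1-β) : ℂ) * ((lam:ℂ) - Complex.I * t) ^ ((β:ℂ) - 1)) t := by
    intro t₀
    have key := hasDerivAt_integral_of_dominated_loc_of_deriv_le
      (μ := volume.restrict (Ioi (0:ℝ))) (F := h)
      (F' := fun (t : ℝ) (y : ℝ) =>
        Complex.exp (Complex.I * y * t) * (Complex.I * y) * Complex.exp (-(lam:ℂ) * y)
          * ((y ^ (-1-β) : ℝ) : ℂ))
      (x₀ := t₀) (bound := fun y => y ^ (-β) * Real.exp (-(lam * y)))
      (Metric.ball_mem_nhds t₀ one_pos) (Eventually.of_forall fun t => hmeas t) (hint t₀) ?_ ?_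
      (aux_int_real hβneg hlam) ?_
    · -- convert the derivative value
      have heq : (∫ y in Ioi (0:ℝ),
          Complex.exp (Complex.I * y * t₀) * (Complex.I * y) * Complex.exp (-(lam:ℂ) * y)
            * ((y ^ (-1-β) : ℝ) : ℂ))
          = Complex.I * (Real.Gamma (1-β) : ℂ) * ((lam:ℂ) - Complex.I * t₀) ^ ((β:ℂ) - 1) := by
        have hstep : ∀ y ∈ Ioi (0:ℝ),
            Complex.exp (Complex.I * y * t₀) * (Complex.I * y) * Complex.exp (-(lam:ℂ) * y)
              * ((y ^ (-1-β) : ℝ) : ℂ)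
            = Complex.I * (((y ^ (-β) : ℝ) : ℂ)
                * Complex.exp (-((lam:ℂ) - Complex.I * t₀) * y)) := by
          intro y hy
          have hy' : (0:ℝ) < y := hy
          have hexp : Complex.exp (Complex.I * y * t₀) * Complex.exp (-(lam:ℂ) * y)
              = Complex.exp (-((lam:ℂ) - Complex.I * t₀) * y) := by
            rw [← Complex.exp_add]; congr 1; ring
          rw [← hrpow hy', Complex.ofReal_mul, ← hexp]
          ring
        rw [setIntegral_congr_fun measurableSet_Ioi hstep, integral_const_mul,
          aux_key hβ0 hβ1 (hzre t₀), mul_assoc]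
      rw [← heq]
      exact key.2
    · -- measurability of F' t₀
      apply ContinuousOn.aestronglyMeasurable _ measurableSet_Ioi
      apply ContinuousOn.mul
      · exact (((Complex.continuous_exp.comp (by continuity)).mul (by continuity)).mul
          (Complex.continuous_exp.comp (by continuity))).continuousOn
      · exact Complex.continuous_ofReal.comp_continuousOn (aux_cont_rpow (-1-β))
    · -- bound
      filter_upwards [self_mem_ae_restrict measurableSet_Ioi] with y hy
      intro t ht
      have hy' : (0:ℝ) < y := hy
      have h4 : (-(lam:ℂ) * y).re = -(lam * y) := by simp
      have h5 : (Complex.I * (y:ℂ) * (t:ℂ)).re = 0 := by simp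
      have hnorm : ‖Complex.exp (Complex.I * y * t) * (Complex.I * y)
          * Complex.exp (-(lam:ℂ) * y) * ((y ^ (-1-β) : ℝ) : ℂ)‖
          = y * Real.exp (-(lam * y)) * y ^ (-1-β) := by
        simp only [norm_mul, Complex.norm_real, Real.norm_eq_abs, Complex.norm_exp,
          map_mul, Complex.norm_I]
        rw [h4, h5, Real.exp_zero, abs_of_nonneg (Real.rpow_nonneg hy'.le _), abs_of_pos hy']
        ring
      rw [hnorm]
      exact le_of_eq (by rw [← hrpow hy']; ring)
    · -- HasDerivAt in t
      filter_upwards [self_mem_ae_restrict measurableSet_Ioi] with y hy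
      intro t ht
      have base : HasDerivAt (fun w : ℂ => Complex.exp (Complex.I * y * w))
          (Complex.exp (Complex.I * y * t) * (Complex.I * y)) (t : ℂ) := by
        have := (((hasDerivAt_id (t:ℂ)).const_mul (Complex.I * (y:ℂ))).cexp)
        simpa [mul_assoc] using this
      have base2 := base.comp_ofReal
      have := ((base2.sub_const 1).mul_const (Complex.exp (-(lam:ℂ) * y))).mul_const
        (((y ^ (-1-β) : ℝ) : ℂ))
      convert this using 1
  -- derivative of T
  have hT' : ∀ t : ℝ, HasDerivAt T
      (Complex.I * (Real.Gamma (1-β) : ℂ) * ((lam:ℂ) - Complex.I * t) ^ ((β:ℂ) - 1)) t := by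
    intro t
    have inner : HasDerivAt (fun w : ℂ => (lam:ℂ) - Complex.I * w) (-(Complex.I * 1)) (t:ℂ) :=
      ((hasDerivAt_id (t:ℂ)).const_mul Complex.I).const_sub (lam:ℂ)
    have hslit : ((lam:ℂ) - Complex.I * (t:ℂ)) ∈ Complex.slitPlane := Or.inl (hzre t)
    have hc := (inner.cpow_const (c := (β:ℂ)) hslit).sub_const ((lam:ℂ) ^ (β:ℂ))
    have hc2 := (hc.const_mul ((Real.Gamma (-β) : ℝ) : ℂ)).comp_ofReal
    convert hc2 using 1
    have : ((Real.Gamma (1 - β) : ℝ) : ℂ) = (-β : ℂ) * ((Real.Gamma (-β) : ℝ) : ℂ) := by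
      rw [hgam]; push_cast; ring
    rw [this]
    ring
  -- F = T
  have hFT : ∀ t : ℝ, F t = T t := by
    have hD : ∀ t : ℝ, HasDerivAt (fun t => F t - T t) 0 t := by
      intro t
      have := (hF' t).sub (hT' t); rw [sub_self] at this; exact this
    have hdiff : Differentiable ℝ (fun t => F t - T t) := fun t => (hD t).differentiableAt
    have hconst : ∀ t : ℝ, F t - T t = F 0 - T 0 := by
      intro t
      exact is_const_of_deriv_eq_zero hdiff (fun x => (hD x).deriv) t 0
    have hF0 : F 0 = 0 := by
      simp only [hF]
      have h0 : ∀ y ∈ Ioi (0:ℝ), h 0 y = 0 := by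
        intro y hy
        rw [hh]
        simp
      rw [setIntegral_congr_fun measurableSet_Ioi h0]
      simp
    have hT0 : T 0 = 0 := by simp only [hT]; simp
    intro t
    have := hconst t
    rw [hF0, hT0] at this
    linear_combination this
  -- assemble
  have hfun : (fun y : ℝ =>
      (Complex.exp (Complex.I * y * ξ) - 1) * (α : ℂ) * Complex.exp (-(lam : ℂ) * y)
        * ((y ^ (-1 - β) : ℝ) : ℂ)) = fun y => (α : ℂ) * h ξ y := by
    funext y; rw [hh]; ring
  constructor
  · rw [hfun]
    exact (hint ξ).const_mul _
  · rw [hfun, integral_const_mul]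
    have hξ := hFT ξ
    simp only [hF, hT] at hξ
    rw [hξ]
    ring
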